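/- In any algebra (S,*,') satisfying the three axioms, the identity (x' * x) * (x''' * x) = x''' * x holds for all x in S. -/
import Mathlib

theorem stmt (S : Type*) (m : S → S → S) (i : S → S)
    (E1 : ∀ x, m (m x (i x)) x = x)
    (E2 : ∀ x y, m (m x (i x)) (m (i y) y) = m (m (i y) y) (m x (i x)))
    (E3 : ∀ x y z, m (m x y) z = m x (m y (i (i z)))) :
    ∀ x, m (m (i x) x) (m (i (i (i x))) x) = m (i (i (i x))) x := by
  intro x
  exact Eq.trans (Eq.trans (Eq.trans (Eq.trans (Eq.trans (Eq.trans (Eq.trans (Eq.trans (Eq.trans (Eq.trans (Eq.trans (Eq.trans (Eq.trans (Eq.trans (Eq.trans (Eq.trans (Eq.trans (Eq.trans ((congrArg (fun t => m t (m (i (i (i (x)))) (x))) (congrArg (fun t => m t (x)) (E1 (i (x))).symm))) ((congrArg (fun t => m t (m (i (i (i (x)))) (x))) (congrArg (fun t => m t (x)) (E3 (i (x)) (i (i (x))) (i (x))))))) ((congrArg (fun t => m t (m (i (i (i (x)))) (x))) (E3 (i (x)) (m (i (i (x))) (i (i (i (x))))) (x))))) ((congrArg (fun t => m t (m (i (i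 (i (x)))) (x))) (congrArg (m (i (x))) (E1 (i (i (x)))))))) ((congrArg (m (m (i (x)) (i (i (x))))) (congrArg (fun t => m t (x)) (E1 (i (i (i (x))))).symm)))) ((congrArg (m (m (i (x)) (i (i (x))))) (congrArg (fun t => m t (x)) (congrArg (m (m (i (i (i (x)))) (i (i (i (i (x))))))) (E1 (i (i (i (x))))).symm))))) ((congrArg (m (m (i (x)) (i (i (x))))) (congrArg (fun t => m t (x)) (E3 (m (i (i (i (x)))) (i (i (i (i (x)))))) (m (i (i (i (x)))) (i (i (i (i (x)))))) (i (x))).symm)))) ((congrArg (m (m (i (x)) (i (i (x))))) (congrArg (fun t => m t (x)) (congrArg (fun t => m t (i (x))) (E3 (m (i (i (i (x)))) (i (i (i (i (x)))))) (i (i (i (x)))) (i (i (x)))).symm))))) ((congrArg (m (m (i (x)) (i (i (x))))) (congrArg (fun t => m t (x)) (E3 (m (m (i (i (i (x)))) (i (i (i (i (x)))))) (i (i (i (x))))) (i (i (x))) (i (x))))))) ((congrArg (m (m (i (x)) (i (i (x))))) (E3 (m (m (i (i (i (x)))) (i (i (i (i (x)))))) (i (i (i (x))))) (m (i (i (x)))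 (i (i (i (x))))) (x))))) ((congrArg (m (m (i (x)) (i (i (x))))) (congrArg (m (m (m (i (i (i (x)))) (i (i (i (i (x)))))) (i (i (i (x)))))) (E1 (i (i (x)))))))) ((congrArg (m (m (i (x)) (i (i (x))))) (congrArg (fun t => m t (i (i (x)))) (E1 (i (i (i (x))))))))) ((E2 (i (x)) (i (i (x)))))) ((congrArg (fun t => m t (m (i (x)) (i (i (x))))) (congrArg (fun t => m t (i (i (x)))) (E1 (i (i (i (x))))).symm)))) ((congrArg (fun t => m t (m (i (x)) (i (i (x))))) (E3 (m (i (i (i (x)))) (i (i (i (i (x)))))) (i (i (i (x)))) (i (i (x))))))) ((E3 (m (m (i (i (i (x)))) (i (i (i (i (x)))))) (m (i (i (i (x)))) (i (i (i (i (x))))))) (i (x)) (x)).symm)) ((congrArg (fun t => m t (x)) (E3 (m (i (i (i (x)))) (i (i (i (i (x)))))) (m (i (i (i (x)))) (i (i (i (i (x)))))) (i (x)))))) ((congrArg (fun t => m t (x)) (congrArg (m (m (i (i (i (x)))) (i (i (i (i (x))))))) (E1 (i (i (i (x))))))))) ((congrArg (fun t => m t (x)) (E1 (i (i (i (x)))))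))
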